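/- For each E ≤ E₀ the initial value problem ρ̄' = E·χ(ρ̄) − J_E with ρ̄(−1) = ρ₋ has a unique solution ρ̄_E on the whole interval [−1,1]; this solution is strictly increasing, takes values in [ρ₋,ρ₊], and satisfies ρ̄_E(1) = ρ₊. Moreover, if E < 0 then J_E/E > max_{r∈[ρ₋,ρ₊]} χ(r). -/

import Mathlib

open Real MeasureTheory Set Filter Topology Function

noncomputable section

def chi (a : ℝ) : ℝ := a * (1 - a)

lemma aux_not_integrable {f : ℝ → ℝ} {a b c C : ℝ} (hab : a < b) (hC : 0 < C)
    (hc : c = a ∨ c = b)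
    (hpos : ∀ r ∈ Set.Icc a b, r ≠ c → 0 < f r)
    (hub : ∀ r ∈ Set.Icc a b, f r ≤ C * |r - c|) :
    ¬ IntervalIntegrable (fun r => (f r)⁻¹) volume a b := by
  intro hI
  have hIoc : Set.uIoc a b = Set.Ioc a b := Set.uIoc_of_le hab.le
  have hφ : IntervalIntegrable (fun r => (C * |r - c|)⁻¹) volume a b := by
    apply hI.mono_fun
    · exact ((measurable_const.mul
        ((measurable_id.sub measurable_const).abs)).inv).aestronglyMeasurable
    · rw [hIoc]
      refine (ae_restrict_iff' measurableSet_Ioc).2 (Filter.Eventually.of_forall ?_)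
      intro r hr
      have hr' : r ∈ Set.Icc a b := Set.Ioc_subset_Icc_self hr
      by_cases hrc : r = c
      · subst hrc
        simp
      · have h1 : 0 < f r := hpos r hr' hrc
        have h2 : f r ≤ C * |r - c| := hub r hr'
        have h3 : (0:ℝ) < C * |r - c| := lt_of_lt_of_le h1 h2
        have h4 : (C * |r - c|)⁻¹ ≤ (f r)⁻¹ := by
          apply inv_anti₀ h1 h2
        simp only [Real.norm_eq_abs, abs_inv, abs_of_pos h1, abs_of_pos h3]
        exact h4
  have habs : IntervalIntegrable (fun r => |r - c|⁻¹) volume a b := by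
    have h5 := hφ.const_mul C
    have h6 : (fun r => C * (C * |r - c|)⁻¹) = fun r : ℝ => |r - c|⁻¹ := by
      funext r
      rw [mul_inv, ← mul_assoc, mul_inv_cancel₀ hC.ne', one_mul]
    rwa [h6] at h5
  have h2 : IntervalIntegrable (fun r => (r - c)⁻¹) volume a b := by
    apply habs.mono_fun
    · exact ((measurable_id.sub measurable_const).inv).aestronglyMeasurable
    · refine Filter.Eventually.of_forall fun r => ?_
      simp [Real.norm_eq_abs, abs_inv]
  rw [intervalIntegrable_sub_inv_iff] at h2
  rcases h2 with h2 | h2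
  · exact hab.ne h2
  · rcases hc with rfl | rfl
    · exact h2 Set.left_mem_uIcc
    · exact h2 Set.right_mem_uIcc

lemma aux_pos {ρm ρp E J : ℝ}
    (h0 : 0 < ρm) (h1 : ρm < ρp) (h2 : ρp < 1)
    (hJneg : J ≤ 0) (hJeq : (1/2) * (∫ r in ρm..ρp, (E * chi r - J)⁻¹) = 1) :
    ∀ r ∈ Set.Icc ρm ρp, 0 < E * chi r - J := by
  have hInt : (∫ r in ρm..ρp, (E * chi r - J)⁻¹) = 2 := by linarith
  rcases lt_trichotomy E 0 with hEneg | rfl | hEpos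
  · -- E < 0 : the hard case
    by_contra hcon
    push_neg at hcon
    obtain ⟨r₀, hr₀, hr₀le⟩ := hcon
    have hI : IntervalIntegrable (fun r => (E * chi r - J)⁻¹) volume ρm ρp := by
      by_contra hni
      rw [intervalIntegral.integral_undef hni] at hInt
      norm_num at hInt
    by_cases hall : ∀ r ∈ Set.Icc ρm ρp, E * chi r - J ≤ 0
    · have hnn : 0 ≤ ∫ r in ρm..ρp, -(E * chi r - J)⁻¹ := by
        apply intervalIntegral.integral_nonneg h1.le
        intro u hu
        exact neg_nonneg.2 (inv_nonpos.2 (hall u hu))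
      rw [intervalIntegral.integral_neg] at hnn
      rw [hInt] at hnn
      norm_num at hnn
    · push_neg at hall
      obtain ⟨r₁, hr₁, hr₁pos⟩ := hall
      have hgc : Continuous fun r : ℝ => E * chi r - J := by
        unfold chi; fun_prop
      have hsub : Set.uIcc r₀ r₁ ⊆ Set.Icc ρm ρp := by
        rw [← Set.uIcc_of_le h1.le]
        exact Set.uIcc_subset_uIcc (by rwa [Set.uIcc_of_le h1.le])
          (by rwa [Set.uIcc_of_le h1.le])
      have h0mem : (0:ℝ) ∈ Set.uIcc (E * chi r₀ - J) (E * chi r₁ - J) := by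
        rw [Set.mem_uIcc]
        exact Or.inl ⟨hr₀le, hr₁pos.le⟩
      obtain ⟨z, hzmem, hz⟩ := intermediate_value_uIcc (hgc.continuousOn) h0mem
      have hzIcc : z ∈ Set.Icc ρm ρp := hsub hzmem
      have hz0 : 0 < z := lt_of_lt_of_le h0 hzIcc.1
      have hz1 : z < 1 := lt_of_le_of_lt hzIcc.2 h2
      set ζ₁ := min z (1 - z) with hζ₁def
      set ζ₂ := max z (1 - z) with hζ₂def
      have hfact : ∀ r, E * chi r - J = (-E) * ((r - ζ₁) * (r - ζ₂)) := by
        intro r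
        rcases le_total z (1 - z) with h' | h'
        · rw [hζ₁def, hζ₂def, min_eq_left h', max_eq_right h']
          unfold chi at hz ⊢
          linear_combination hz
        · rw [hζ₁def, hζ₂def, min_eq_right h', max_eq_left h']
          unfold chi at hz ⊢
          linear_combination hz
      have hζ₁pos : 0 < ζ₁ := lt_min hz0 (by linarith)
      have hζ₂lt : ζ₂ < 1 := max_lt hz1 (by linarith)
      have hζ₁₂ : ζ₁ ≤ ζ₂ := min_le_max
      have hEpos' : 0 < -E := by linarith
      rcases lt_or_ge r₁ ζ₁ with hcase | hge
      · -- singularity at ζ₁, right end of [r₁, ζ₁]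
        have hζ₁Icc : ζ₁ ∈ Set.Icc ρm ρp :=
          ⟨le_trans hr₁.1 hcase.le, le_trans (min_le_left _ _) hzIcc.2⟩
        have hsub' : Set.uIcc r₁ ζ₁ ⊆ Set.uIcc ρm ρp := by
          apply Set.uIcc_subset_uIcc <;> rw [Set.uIcc_of_le h1.le]
          · exact hr₁
          · exact hζ₁Icc
        refine aux_not_integrable hcase hEpos' (Or.inr rfl) ?_ ?_ (hI.mono_set hsub')
        · intro r hr hrne
          have hrζ₁ : r < ζ₁ := lt_of_le_of_ne hr.2 hrne
          rw [hfact r, show (r - ζ₁) * (r - ζ₂) = (ζ₁ - r) * (ζ₂ - r) from by ring]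
          exact mul_pos hEpos' (mul_pos (by linarith) (by linarith))
        · intro r hr
          rw [hfact r, abs_of_nonpos (by linarith [hr.2] : r - ζ₁ ≤ 0)]
          have hrρm : ρm ≤ r := le_trans hr₁.1 hr.1
          calc -E * ((r - ζ₁) * (r - ζ₂)) = -E * (ζ₁ - r) * (ζ₂ - r) := by ring
            _ ≤ -E * (ζ₁ - r) := mul_le_of_le_one_right
                (mul_nonneg hEpos'.le (by linarith [hr.2])) (by linarith)
            _ = -E * -(r - ζ₁) := by ring
      · rcases lt_or_ge ζ₂ r₁ with hcase2 | hle2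
        · -- singularity at ζ₂, left end of [ζ₂, r₁]
          have hζ₂Icc : ζ₂ ∈ Set.Icc ρm ρp :=
            ⟨le_trans hzIcc.1 (le_max_left _ _), le_trans hcase2.le hr₁.2⟩
          have hsub' : Set.uIcc ζ₂ r₁ ⊆ Set.uIcc ρm ρp := by
            apply Set.uIcc_subset_uIcc <;> rw [Set.uIcc_of_le h1.le]
            · exact hζ₂Icc
            · exact hr₁
          refine aux_not_integrable hcase2 hEpos' (Or.inl rfl) ?_ ?_ (hI.mono_set hsub')
          · intro r hr hrne
            have hrζ₂ : ζ₂ < r := lt_of_le_of_ne hr.1 (Ne.symm hrne)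
            rw [hfact r]
            exact mul_pos hEpos' (mul_pos (by linarith) (by linarith))
          · intro r hr
            rw [hfact r, abs_of_nonneg (by linarith [hr.1] : (0:ℝ) ≤ r - ζ₂)]
            have hrρp : r ≤ ρp := le_trans hr.2 hr₁.2
            calc -E * ((r - ζ₁) * (r - ζ₂)) = -E * (r - ζ₂) * (r - ζ₁) := by ring
              _ ≤ -E * (r - ζ₂) := mul_le_of_le_one_right
                  (mul_nonneg hEpos'.le (by linarith [hr.1])) (by linarith)
        · -- ζ₁ ≤ r₁ ≤ ζ₂ : contradiction with g r₁ > 0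
          have heq := hfact r₁
          have hp : 0 ≤ r₁ - ζ₁ := by linarith
          have hq : 0 ≤ ζ₂ - r₁ := by linarith
          have hprod : 0 ≤ -E * ((r₁ - ζ₁) * (ζ₂ - r₁)) :=
            mul_nonneg hEpos'.le (mul_nonneg hp hq)
          nlinarith [hprod, hr₁pos, heq]
  · -- E = 0
    by_cases hJ : J = 0
    · subst hJ
      simp at hInt
    · intro r hr
      have hJlt : J < 0 := lt_of_le_of_ne hJneg hJ
      simp only [zero_mul, zero_sub]
      linarith
  · -- E > 0
    intro r hr
    have hr0 : 0 < r := lt_of_lt_of_le h0 hr.1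
    have hr1 : r < 1 := lt_of_le_of_lt hr.2 h2
    have hχ : 0 < chi r := by unfold chi; nlinarith
    nlinarith

theorem stmt1 (ρm ρp φm φp E0 : ℝ)
    (h0 : 0 < ρm) (h1 : ρm < ρp) (h2 : ρp < 1)
    (hφm : φm = Real.log (ρm / (1 - ρm))) (hφp : φp = Real.log (ρp / (1 - ρp)))
    (hE0 : E0 = (φp - φm) / 2) (E J : ℝ) (hE : E ≤ E0)
    (hJneg : J ≤ 0) (hJeq : (1/2) * (∫ r in ρm..ρp, (E * chi r - J)⁻¹) = 1) :
    ∃ ρb : ℝ → ℝ,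
      (ρb (-1) = ρm ∧
        ∀ u ∈ Set.Icc (-1:ℝ) 1,
          HasDerivWithinAt ρb (E * chi (ρb u) - J) (Set.Icc (-1:ℝ) 1) u) ∧
      (∀ σ : ℝ → ℝ, σ (-1) = ρm →
        (∀ u ∈ Set.Icc (-1:ℝ) 1,
          HasDerivWithinAt σ (E * chi (σ u) - J) (Set.Icc (-1:ℝ) 1) u) →
        Set.EqOn σ ρb (Set.Icc (-1:ℝ) 1)) ∧
      StrictMonoOn ρb (Set.Icc (-1:ℝ) 1) ∧
      (∀ u ∈ Set.Icc (-1:ℝ) 1, ρb u ∈ Set.Icc ρm ρp) ∧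
      ρb 1 = ρp ∧
      (E < 0 → ∀ r ∈ Set.Icc ρm ρp, chi r < J / E) := by
  classical
  have hgpos : ∀ r ∈ Set.Icc ρm ρp, 0 < E * chi r - J := aux_pos h0 h1 h2 hJneg hJeq
  -- minimum of g on the compact interval
  have hgc : Continuous fun r : ℝ => E * chi r - J := by unfold chi; fun_prop
  obtain ⟨rmin, hrmin, hmin⟩ := isCompact_Icc.exists_isMinOn (Set.nonempty_Icc.2 h1.le)
    hgc.continuousOn
  set m : ℝ := E * chi rmin - J with hm_def
  have hm_pos : 0 < m := hgpos rmin hrmin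
  have hm_le : ∀ r ∈ Set.Icc ρm ρp, m ≤ E * chi r - J := fun r hr => hmin hr
  -- globally positive modification of g
  set G : ℝ → ℝ := fun r => max (E * chi r - J) m with hG_def
  have hGg : ∀ r ∈ Set.Icc ρm ρp, G r = E * chi r - J := fun r hr =>
    max_eq_left (hm_le r hr)
  have hGpos : ∀ r, 0 < G r := fun r => lt_of_lt_of_le hm_pos (le_max_right _ _)
  have hGcont : Continuous G := hgc.max continuous_const
  have hGinv_cont : Continuous fun r => (G r)⁻¹ :=
    hGcont.inv₀ fun r => (hGpos r).ne'
  -- the antiderivative F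
  set F : ℝ → ℝ := fun y => ∫ r in ρm..y, (G r)⁻¹ with hF_def
  have hF_deriv : ∀ y, HasDerivAt F ((G y)⁻¹) y := by
    intro y
    exact intervalIntegral.integral_hasDerivAt_right
      (hGinv_cont.intervalIntegrable _ _)
      hGinv_cont.aestronglyMeasurable.stronglyMeasurableAtFilter
      hGinv_cont.continuousAt
  have hFmono : StrictMono F :=
    strictMono_of_hasDerivAt_pos hF_deriv fun y => inv_pos.2 (hGpos y)
  have hFρm : F ρm = 0 := intervalIntegral.integral_same
  have hFρp : F ρp = 2 := by
    have hcongr : (∫ r in ρm..ρp, (G r)⁻¹) = ∫ r in ρm..ρp, (E * chi r - J)⁻¹ := by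
      apply intervalIntegral.integral_congr
      intro r hr
      rw [Set.uIcc_of_le h1.le] at hr
      exact congrArg Inv.inv (hGg r hr)
    simp only [hF_def]
    rw [hcongr]
    linarith
  -- surjectivity range
  set a₀ : ℝ := ρm - 1 with ha₀_def
  set b₀ : ℝ := ρp + 1 with hb₀_def
  have hFa₀ : F a₀ < 0 := by
    rw [← hFρm]; exact hFmono (by simp [ha₀_def])
  have hFb₀ : 2 < F b₀ := by
    rw [← hFρp]; exact hFmono (by simp [hb₀_def])
  have hsurj : ∀ v ∈ Set.Icc (F a₀) (F b₀), ∃ x, F x = v := by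
    intro v hv
    have := intermediate_value_Icc (by linarith : a₀ ≤ b₀)
      (fun y _ => (hF_deriv y).continuousAt.continuousWithinAt)
    obtain ⟨x, _, hx⟩ := this hv
    exact ⟨x, hx⟩
  set S : Set ℝ := Set.Ioo (F a₀ - 1) (F b₀ - 1) with hS_def
  have hS_open : IsOpen S := isOpen_Ioo
  have hS_incl : Set.Icc (-1:ℝ) 1 ⊆ S := fun u hu =>
    ⟨by linarith [hu.1], by linarith [hu.2]⟩
  set ρb : ℝ → ℝ := fun u => if h : ∃ x, F x = u + 1 then h.choose else ρm
    with hρb_def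
  have hFρb : ∀ u ∈ S, F (ρb u) = u + 1 := by
    intro u hu
    have hex : ∃ x, F x = u + 1 := hsurj (u+1) ⟨by linarith [hu.1], by linarith [hu.2]⟩
    simp only [hρb_def, dif_pos hex]
    exact hex.choose_spec
  have hm1S : (-1:ℝ) ∈ S := hS_incl ⟨le_refl _, by norm_num⟩
  have h1S : (1:ℝ) ∈ S := hS_incl ⟨by norm_num, le_refl _⟩
  have hρb_m1 : ρb (-1) = ρm := by
    have h := hFρb (-1) hm1S
    rw [show (-1:ℝ) + 1 = 0 by ring, ← hFρm] at h
    exact hFmono.injective h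
  have hρb_1 : ρb 1 = ρp := by
    have h := hFρb 1 h1S
    rw [show (1:ℝ) + 1 = 2 by ring, ← hFρp] at h
    exact hFmono.injective h
  have hmaps : ∀ u ∈ Set.Icc (-1:ℝ) 1, ρb u ∈ Set.Icc ρm ρp := by
    intro u hu
    have h := hFρb u (hS_incl hu)
    constructor
    · refine hFmono.le_iff_le.mp ?_
      rw [h, hFρm]; linarith [hu.1]
    · refine hFmono.le_iff_le.mp ?_
      rw [h, hFρp]; linarith [hu.2]
  have hsm : StrictMonoOn ρb S := by
    intro u hu v hv huv
    refine hFmono.lt_iff_lt.mp ?_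
    rw [hFρb u hu, hFρb v hv]
    linarith
  -- continuity of ρb on S
  have hρb_cont : ∀ u ∈ S, ContinuousAt ρb u := by
    intro u hu
    rw [Metric.continuousAt_iff]
    intro ε hε
    set x := ρb u with hx_def
    have hFx : F x = u + 1 := hFρb u hu
    have hd1 : 0 < F (x + ε) - (u + 1) := by
      rw [← hFx]; simp only [sub_pos]; exact hFmono (by linarith)
    have hd2 : 0 < (u + 1) - F (x - ε) := by
      rw [← hFx]; simp only [sub_pos]; exact hFmono (by linarith)
    obtain ⟨δ₃, hδ₃, hball⟩ := Metric.isOpen_iff.1 hS_open u hu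
    refine ⟨min (min (F (x + ε) - (u + 1)) ((u + 1) - F (x - ε))) δ₃,
      by positivity, ?_⟩
    intro y hy
    have hyS : y ∈ S := hball (lt_of_lt_of_le hy (min_le_right _ _))
    have hy' : |y - u| < min (F (x + ε) - (u + 1)) ((u + 1) - F (x - ε)) :=
      lt_of_lt_of_le hy (min_le_left _ _)
    rw [Real.dist_eq] at *
    have hy1 : y - u < F (x + ε) - (u + 1) :=
      lt_of_le_of_lt (le_abs_self _) (lt_of_lt_of_le hy' (min_le_left _ _))
    have hy2 : -(y - u) < (u + 1) - F (x - ε) :=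
      lt_of_le_of_lt (neg_le_abs _) (lt_of_lt_of_le hy' (min_le_right _ _))
    have hFy : F (ρb y) = y + 1 := hFρb y hyS
    have hlt1 : ρb y < x + ε := by
      refine hFmono.lt_iff_lt.mp ?_
      rw [hFy]; linarith
    have hlt2 : x - ε < ρb y := by
      refine hFmono.lt_iff_lt.mp ?_
      rw [hFy]; linarith
    rw [abs_sub_lt_iff]
    constructor <;> linarith
  -- derivative of ρb
  have hρb_deriv : ∀ u ∈ S, HasDerivAt ρb (G (ρb u)) u := by
    intro u hu
    have hne : ((G (ρb u))⁻¹ : ℝ) ≠ 0 := inv_ne_zero (hGpos _).ne'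
    have hloc : ∀ᶠ y in 𝓝 u, (fun x => F x - 1) (ρb y) = y := by
      filter_upwards [hS_open.mem_nhds hu] with y hy
      rw [hFρb y hy]; ring
    have h := HasDerivAt.of_local_left_inverse (hρb_cont u hu)
      ((hF_deriv (ρb u)).sub_const 1) hne hloc
    rwa [inv_inv] at h
  have hd : ∀ u ∈ Set.Icc (-1:ℝ) 1,
      HasDerivWithinAt ρb (E * chi (ρb u) - J) (Set.Icc (-1:ℝ) 1) u := by
    intro u hu
    have h := (hρb_deriv u (hS_incl hu)).hasDerivWithinAt (s := Set.Icc (-1:ℝ) 1)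
    rwa [hGg _ (hmaps u hu)] at h
  have huniq : ∀ σ : ℝ → ℝ, σ (-1) = ρm →
      (∀ u ∈ Set.Icc (-1:ℝ) 1,
        HasDerivWithinAt σ (E * chi (σ u) - J) (Set.Icc (-1:ℝ) 1) u) →
      Set.EqOn σ ρb (Set.Icc (-1:ℝ) 1) := by
    intro σ hσ0 hσd
    have hσcont : ContinuousOn σ (Set.Icc (-1:ℝ) 1) :=
      fun u hu => (hσd u hu).continuousWithinAt
    have hρcont : ContinuousOn ρb (Set.Icc (-1:ℝ) 1) :=
      fun u hu => (hd u hu).continuousWithinAt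
    obtain ⟨R₀, hR₀⟩ :=
      (isCompact_Icc.image_of_continuousOn hσcont).isBounded.subset_closedBall 0
    set R : ℝ := max R₀ (max 1 ρp) with hR_def
    have hR1 : (1:ℝ) ≤ R := le_trans (le_max_left _ _) (le_max_right _ _)
    have hRρp : ρp ≤ R := le_trans (le_max_right _ _) (le_max_right _ _)
    have hσball : ∀ u ∈ Set.Icc (-1:ℝ) 1, σ u ∈ Metric.closedBall (0:ℝ) R := by
      intro u hu
      exact Metric.closedBall_subset_closedBall (le_max_left _ _) (hR₀ ⟨u, hu, rfl⟩)
    have hρball : ∀ u ∈ Set.Icc (-1:ℝ) 1, ρb u ∈ Metric.closedBall (0:ℝ) R := by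
      intro u hu
      have h := hmaps u hu
      rw [Metric.mem_closedBall, Real.dist_eq, sub_zero, abs_le]
      constructor
      · linarith [h.1, h0, hR1]
      · linarith [h.2, hRρp]
    set K : NNReal := Real.toNNReal (|E| * (2*R + 1)) with hK_def
    have hlip : ∀ t : ℝ, LipschitzOnWith K (fun x => E * chi x - J)
        (Metric.closedBall (0:ℝ) R) := by
      intro t
      apply LipschitzOnWith.of_dist_le_mul
      intro x hx y hy
      rw [Metric.mem_closedBall, Real.dist_eq, sub_zero] at hx hy
      rw [Real.dist_eq, Real.dist_eq]
      have hcoe : (K : ℝ) = |E| * (2*R + 1) := Real.coe_toNNReal _ (by positivity)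
      rw [hcoe]
      have heq : E * chi x - J - (E * chi y - J) = E * ((x - y) * (1 - x - y)) := by
        unfold chi; ring
      rw [heq, abs_mul, abs_mul]
      have habs : |1 - x - y| ≤ 2*R + 1 := by
        rw [abs_le] at hx hy ⊢
        constructor <;> linarith [hx.1, hx.2, hy.1, hy.2]
      calc |E| * (|x - y| * |1 - x - y|)
          ≤ |E| * (|x - y| * (2*R+1)) :=
            mul_le_mul_of_nonneg_left
              (mul_le_mul_of_nonneg_left habs (abs_nonneg _)) (abs_nonneg _)
        _ = |E| * (2*R+1) * |x - y| := by ring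
    exact ODE_solution_unique_of_mem_Icc_right (fun t _ => hlip t)
      hσcont
      (fun t ht => (hσd t (Set.Ico_subset_Icc_self ht)).mono_of_mem_nhdsWithin
        (Icc_mem_nhdsGE_of_mem ht))
      (fun t ht => hσball t (Set.Ico_subset_Icc_self ht))
      hρcont
      (fun t ht => (hd t (Set.Ico_subset_Icc_self ht)).mono_of_mem_nhdsWithin
        (Icc_mem_nhdsGE_of_mem ht))
      (fun t ht => hρball t (Set.Ico_subset_Icc_self ht))
      (by rw [hσ0, hρb_m1])
  refine ⟨ρb, ⟨hρb_m1, hd⟩, huniq, ?_, hmaps, hρb_1, ?_⟩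
  · exact fun u hu v hv huv => hsm (hS_incl hu) (hS_incl hv) huv
  · intro hEneg r hr
    have h := hgpos r hr
    rw [lt_div_iff_of_neg hEneg]
    nlinarith
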